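/- Let F be a set and let C be a linearly ordered set equipped with an F-indexed family of order automorphisms. Then C is a strong amalgamation base for the class of linearly ordered sets with an F-indexed family of strict order preserving unary operations: whenever A and B are linearly ordered sets with F-indexed families of strictly monotone unary operations and i_A : C → A, i_B : C → B are order embeddings commuting with each indexed operation, there exist a linearly ordered set D with an F-indexed family of strictly monotone unary operations and order embeddings j_A : A → D, j_B : B → D commuting with each indexed operation, such that j_A ∘ i_A = j_B ∘ i_B and range(j_A) ∩ range(j_B) = range(j_A ∘ i_A). -/

import Mathlib

/-- A linearly ordered set equipped with an `F`-indexed family of order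
automorphisms. -/
structure LinOrderAuts (F : Type) where
  carrier : Type
  [linOrd : LinearOrder carrier]
  f : F → carrier ≃o carrier

attribute [instance] LinOrderAuts.linOrd

/-- A linearly ordered set equipped with an `F`-indexed family of strict order
preserving (strictly monotone) unary operations. -/
structure LinOrderStrictOps (F : Type) where
  carrier : Type
  [linOrd : LinearOrder carrier]
  f : F → carrier → carrier
  smono : ∀ i, StrictMono (f i)

attribute [instance] LinOrderStrictOps.linOrd

namespace AmalgAux

variable {F : Type} {C : LinOrderAuts F} {A B : LinOrderStrictOps F}

/-- `b` is strictly below `a` witnessed by a point of `C`. -/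
def R (iA : C.carrier ↪o A.carrier) (iB : C.carrier ↪o B.carrier)
    (a : A.carrier) (b : B.carrier) : Prop :=
  ∃ c, b < iB c ∧ iA c ≤ a

/-- carrier of the amalgam -/
def Dc (_iA : C.carrier ↪o A.carrier) (iB : C.carrier ↪o B.carrier) : Type :=
  A.carrier ⊕ {b : B.carrier // b ∉ Set.range iB}

def inlD (iA : C.carrier ↪o A.carrier) (iB : C.carrier ↪o B.carrier)
    (a : A.carrier) : Dc iA iB := Sum.inl a

def inrD (iA : C.carrier ↪o A.carrier) (iB : C.carrier ↪o B.carrier)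
    (b : {b : B.carrier // b ∉ Set.range iB}) : Dc iA iB := Sum.inr b

def dle (iA : C.carrier ↪o A.carrier) (iB : C.carrier ↪o B.carrier) :
    Dc iA iB → Dc iA iB → Prop
  | Sum.inl a, Sum.inl a' => a ≤ a'
  | Sum.inl a, Sum.inr b => ¬ R iA iB a b.1
  | Sum.inr b, Sum.inl a => R iA iB a b.1
  | Sum.inr b, Sum.inr b' => b.1 ≤ b'.1

noncomputable instance instLinOrd (iA : C.carrier ↪o A.carrier)
    (iB : C.carrier ↪o B.carrier) : LinearOrder (Dc iA iB) where
  le := dle iA iB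
  le_refl x := by cases x <;> simp [dle]
  le_trans x y z hxy hyz := by
    rcases x with a | b <;> rcases y with a' | b' <;> rcases z with a'' | b'' <;>
      simp only [dle] at *
    · exact hxy.trans hyz
    · rintro ⟨c, hc1, hc2⟩; exact hyz ⟨c, hc1, hc2.trans hxy⟩
    · obtain ⟨c, hc1, hc2⟩ := hyz
      exact ((not_le.mp fun h => hxy ⟨c, hc1, h⟩).le).trans hc2
    · rintro ⟨c, hc1, hc2⟩; exact hxy ⟨c, hyz.trans_lt hc1, hc2⟩
    · obtain ⟨c, hc1, hc2⟩ := hxy; exact ⟨c, hc1, hc2.trans hyz⟩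
    · obtain ⟨c, hc1, hc2⟩ := hxy
      by_contra h
      exact hyz ⟨c, (not_le.mp h).trans hc1, hc2⟩
    · obtain ⟨c, hc1, hc2⟩ := hyz; exact ⟨c, hxy.trans_lt hc1, hc2⟩
    · exact hxy.trans hyz
  le_antisymm x y hxy hyx := by
    rcases x with a | b <;> rcases y with a' | b' <;> simp only [dle] at *
    · exact congrArg _ (le_antisymm hxy hyx)
    · exact absurd hyx hxy
    · exact absurd hxy hyx
    · exact congrArg _ (Subtype.ext (le_antisymm hxy hyx))
  le_total x y := by
    rcases x with a | b <;> rcases y with a' | b' <;> simp only [dle]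
    · exact le_total _ _
    · exact (em _).symm
    · exact em _
    · exact le_total _ _
  toDecidableLE := Classical.decRel _

section LeLemmas

variable (iA : C.carrier ↪o A.carrier) (iB : C.carrier ↪o B.carrier)

lemma le_inl_inl {a a' : A.carrier} :
    inlD iA iB a ≤ inlD iA iB a' ↔ a ≤ a' := Iff.rfl

lemma le_inl_inr {a : A.carrier} {b} :
    inlD iA iB a ≤ inrD iA iB b ↔ ¬ R iA iB a b.1 := Iff.rfl

lemma le_inr_inl {a : A.carrier} {b} :
    inrD iA iB b ≤ inlD iA iB a ↔ R iA iB a b.1 := Iff.rfl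

lemma le_inr_inr {b b'} :
    inrD iA iB b ≤ inrD iA iB b' ↔ b.1 ≤ b'.1 := Iff.rfl

/-- `R` at a point of `C` on the left. -/
lemma R_iA {c : C.carrier} {b : B.carrier} :
    R iA iB (iA c) b ↔ b < iB c := by
  constructor
  · rintro ⟨c', hc1, hc2⟩
    exact hc1.trans_le (iB.monotone (iA.le_iff_le.mp hc2))
  · intro h; exact ⟨c, h, le_rfl⟩

end LeLemmas

lemma notRange_map (iB : C.carrier ↪o B.carrier)
    (hB : ∀ i c, iB (C.f i c) = B.f i (iB c)) (i : F) {b : B.carrier}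
    (h : b ∉ Set.range iB) : B.f i b ∉ Set.range iB := by
  rintro ⟨c, hc⟩
  obtain ⟨c', rfl⟩ := (C.f i).surjective c
  exact h ⟨c', (B.smono i).injective ((hB i c').symm.trans hc)⟩

lemma R_map (iA : C.carrier ↪o A.carrier) (iB : C.carrier ↪o B.carrier)
    (hA : ∀ i c, iA (C.f i c) = A.f i (iA c))
    (hB : ∀ i c, iB (C.f i c) = B.f i (iB c)) (i : F)
    {a : A.carrier} {b : B.carrier} :
    R iA iB (A.f i a) (B.f i b) ↔ R iA iB a b := by
  constructor
  · rintro ⟨c, hc1, hc2⟩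
    obtain ⟨c', rfl⟩ := (C.f i).surjective c
    rw [hB] at hc1; rw [hA] at hc2
    exact ⟨c', (B.smono i).lt_iff_lt.mp hc1, (A.smono i).le_iff_le.mp hc2⟩
  · rintro ⟨c, hc1, hc2⟩
    refine ⟨C.f i c, ?_, ?_⟩
    · rw [hB]; exact (B.smono i).lt_iff_lt.mpr hc1
    · rw [hA]; exact (A.smono i).le_iff_le.mpr hc2

/-- the operations on the amalgam -/
def Df (iA : C.carrier ↪o A.carrier) (iB : C.carrier ↪o B.carrier)
    (hB : ∀ i c, iB (C.f i c) = B.f i (iB c)) (i : F) :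
    Dc iA iB → Dc iA iB
  | Sum.inl a => inlD iA iB (A.f i a)
  | Sum.inr b => inrD iA iB ⟨B.f i b.1, notRange_map iB hB i b.2⟩

lemma Df_le_iff (iA : C.carrier ↪o A.carrier) (iB : C.carrier ↪o B.carrier)
    (hA : ∀ i c, iA (C.f i c) = A.f i (iA c))
    (hB : ∀ i c, iB (C.f i c) = B.f i (iB c)) (i : F) (x y : Dc iA iB) :
    Df iA iB hB i x ≤ Df iA iB hB i y ↔ x ≤ y := by
  rcases x with a | b <;> rcases y with a' | b'
  · exact (A.smono i).le_iff_le
  · show inlD iA iB _ ≤ inrD iA iB _ ↔ inlD iA iB _ ≤ inrD iA iB _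
    rw [le_inl_inr, le_inl_inr]
    exact not_congr (R_map iA iB hA hB i)
  · show inrD iA iB _ ≤ inlD iA iB _ ↔ inrD iA iB _ ≤ inlD iA iB _
    rw [le_inr_inl, le_inr_inl]
    exact R_map iA iB hA hB i
  · exact (B.smono i).le_iff_le

lemma Df_smono (iA : C.carrier ↪o A.carrier) (iB : C.carrier ↪o B.carrier)
    (hA : ∀ i c, iA (C.f i c) = A.f i (iA c))
    (hB : ∀ i c, iB (C.f i c) = B.f i (iB c)) (i : F) :
    StrictMono (Df iA iB hB i) := by
  intro x y h
  rw [lt_iff_le_not_ge] at h ⊢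
  rw [Df_le_iff iA iB hA hB, Df_le_iff iA iB hA hB]
  exact h

/-- the amalgam as a structure -/
noncomputable def D (iA : C.carrier ↪o A.carrier) (iB : C.carrier ↪o B.carrier)
    (hA : ∀ i c, iA (C.f i c) = A.f i (iA c))
    (hB : ∀ i c, iB (C.f i c) = B.f i (iB c)) : LinOrderStrictOps F where
  carrier := Dc iA iB
  f := Df iA iB hB
  smono := Df_smono iA iB hA hB

/-- the embedding of `A` -/
noncomputable def jA (iA : C.carrier ↪o A.carrier) (iB : C.carrier ↪o B.carrier) :
    A.carrier ↪o Dc iA iB :=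
  OrderEmbedding.ofMapLEIff (inlD iA iB) (fun _ _ => le_inl_inl iA iB)

open Classical in
/-- the embedding of `B`, as a function -/
noncomputable def jBf (iA : C.carrier ↪o A.carrier)
    (iB : C.carrier ↪o B.carrier) (b : B.carrier) : Dc iA iB :=
  if h : b ∈ Set.range iB then inlD iA iB (iA h.choose) else inrD iA iB ⟨b, h⟩

lemma jBf_iB (iA : C.carrier ↪o A.carrier) (iB : C.carrier ↪o B.carrier)
    (c : C.carrier) : jBf iA iB (iB c) = inlD iA iB (iA c) := by
  have h : (iB c : B.carrier) ∈ Set.range iB := ⟨c, rfl⟩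
  have hc : h.choose = c := iB.injective h.choose_spec
  simp only [jBf]
  rw [dif_pos h, hc]

lemma jBf_not (iA : C.carrier ↪o A.carrier) (iB : C.carrier ↪o B.carrier)
    {b : B.carrier} (h : b ∉ Set.range iB) :
    jBf iA iB b = inrD iA iB ⟨b, h⟩ := by
  simp only [jBf]
  rw [dif_neg h]

lemma jBf_le_iff (iA : C.carrier ↪o A.carrier) (iB : C.carrier ↪o B.carrier)
    (b b' : B.carrier) : jBf iA iB b ≤ jBf iA iB b' ↔ b ≤ b' := by
  by_cases h : b ∈ Set.range iB <;> by_cases h' : b' ∈ Set.range iB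
  · obtain ⟨c, rfl⟩ := h; obtain ⟨c', rfl⟩ := h'
    rw [jBf_iB, jBf_iB, le_inl_inl, iA.le_iff_le, iB.le_iff_le]
  · obtain ⟨c, rfl⟩ := h
    rw [jBf_iB, jBf_not iA iB h', le_inl_inr, R_iA]
    exact ⟨fun hh => le_of_not_gt hh, fun hh => not_lt.mpr hh⟩
  · obtain ⟨c, rfl⟩ := h'
    rw [jBf_iB, jBf_not iA iB h, le_inr_inl, R_iA]
    exact ⟨fun hh => hh.le, fun hh => lt_of_le_of_ne hh (fun e => h ⟨c, e.symm⟩)⟩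
  · rw [jBf_not iA iB h, jBf_not iA iB h', le_inr_inr]

/-- the embedding of `B` -/
noncomputable def jB (iA : C.carrier ↪o A.carrier)
    (iB : C.carrier ↪o B.carrier) : B.carrier ↪o Dc iA iB :=
  OrderEmbedding.ofMapLEIff (jBf iA iB) (jBf_le_iff iA iB)

lemma jB_comm (iA : C.carrier ↪o A.carrier) (iB : C.carrier ↪o B.carrier)
    (hA : ∀ i c, iA (C.f i c) = A.f i (iA c))
    (hB : ∀ i c, iB (C.f i c) = B.f i (iB c)) (i : F) (b : B.carrier) :
    jBf iA iB (B.f i b) = Df iA iB hB i (jBf iA iB b) := by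
  by_cases h : b ∈ Set.range iB
  · obtain ⟨c, rfl⟩ := h
    rw [← hB, jBf_iB, jBf_iB]
    show inlD iA iB (iA (C.f i c)) = inlD iA iB (A.f i (iA c))
    rw [hA]
  · rw [jBf_not iA iB h, jBf_not iA iB (notRange_map iB hB i h)]
    rfl

end AmalgAux

/-- A linearly ordered set with an `F`-indexed family of order automorphisms is a
strong amalgamation base for the class of linearly ordered sets with an
`F`-indexed family of strict order preserving unary operations. -/
theorem automorphisms_strong_amalgamation_base (F : Type)
    (C : LinOrderAuts F) (A B : LinOrderStrictOps F)
    (iA : C.carrier ↪o A.carrier) (iB : C.carrier ↪o B.carrier)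
    (hA : ∀ i c, iA (C.f i c) = A.f i (iA c))
    (hB : ∀ i c, iB (C.f i c) = B.f i (iB c)) :
    ∃ (D : LinOrderStrictOps F) (jA : A.carrier ↪o D.carrier)
      (jB : B.carrier ↪o D.carrier),
      (∀ i a, jA (A.f i a) = D.f i (jA a)) ∧
      (∀ i b, jB (B.f i b) = D.f i (jB b)) ∧
      (∀ c, jA (iA c) = jB (iB c)) ∧
      Set.range jA ∩ Set.range jB = Set.range (fun c => jA (iA c)) := by
  refine ⟨AmalgAux.D iA iB hA hB, AmalgAux.jA iA iB, AmalgAux.jB iA iB,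
    fun i a => rfl, AmalgAux.jB_comm iA iB hA hB,
    fun c => (AmalgAux.jBf_iB iA iB c).symm, ?_⟩
  ext x
  simp only [Set.mem_inter_iff, Set.mem_range]
  constructor
  · rintro ⟨⟨a, rfl⟩, ⟨b, hb⟩⟩
    by_cases h : b ∈ Set.range iB
    · obtain ⟨c, rfl⟩ := h
      exact ⟨c, by rw [← hb]; exact (AmalgAux.jBf_iB iA iB c).symm⟩
    · exfalso
      have h2 : AmalgAux.jBf iA iB b = AmalgAux.inlD iA iB a := hb
      rw [AmalgAux.jBf_not iA iB h] at h2
      exact Sum.inr_ne_inl h2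
  · rintro ⟨c, rfl⟩
    exact ⟨⟨iA c, rfl⟩, ⟨iB c, AmalgAux.jBf_iB iA iB c⟩⟩
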